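/- Let G be a finite group and let X = {x_g}_{g ∈ G} be a finite frame for a d-dimensional complex Hilbert space H. Then X is a group frame for G if and only if its Gramian is a G-matrix, i.e., if and only if there exists a function ν : G → ℂ such that ⟨x_h, x_g⟩ = ν(g⁻¹ • h) for all g, h ∈ G. -/

import Mathlib

open scoped ComplexInnerProductSpace

noncomputable section GroupFrameAux

variable {G : Type} [Group G] [Fintype G]
  {H : Type} [NormedAddCommGroup H] [InnerProductSpace ℂ H]

set_option linter.unusedSectionVars false

/-- synthesis map -/
def frameS (x : G → H) : (G → ℂ) →ₗ[ℂ] H where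
  toFun c := ∑ h, c h • x h
  map_add' a b := by simp [add_smul, Finset.sum_add_distrib]
  map_smul' r a := by simp [smul_smul, Finset.smul_sum]

lemma frameS_apply (x : G → H) (c : G → ℂ) : frameS x c = ∑ h, c h • x h := rfl

lemma frameS_single [DecidableEq G] (x : G → H) (h : G) :
    frameS x (Pi.single h 1) = x h := by
  simp [frameS_apply, Pi.single_apply]

lemma frameS_surj (x : G → H) (hframe : Submodule.span ℂ (Set.range x) = ⊤) :
    Function.Surjective (frameS x) := by
  classical
  rw [← LinearMap.range_eq_top]
  refine top_unique ?_
  rw [← hframe]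
  refine Submodule.span_le.2 ?_
  rintro _ ⟨h, rfl⟩
  exact ⟨Pi.single h 1, frameS_single x h⟩

/-- left translation on coefficients -/
def framePg (g : G) : (G → ℂ) →ₗ[ℂ] (G → ℂ) := LinearMap.funLeft ℂ ℂ (fun h => g⁻¹ * h)

lemma framePg_apply (g : G) (c : G → ℂ) (h : G) : framePg g c h = c (g⁻¹ * h) := rfl

lemma frameS_inner (x : G → H) {ν : G → ℂ} (hν : ∀ g h : G, ⟪x g, x h⟫ = ν (g⁻¹ * h))
    (a b : G → ℂ) :
    ⟪frameS x a, frameS x b⟫ =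
      ∑ h, ∑ k, (starRingEnd ℂ) (a h) * (b k * ν (h⁻¹ * k)) := by
  simp only [frameS_apply, sum_inner, inner_sum, inner_smul_left, inner_smul_right, hν]
  rw [Finset.sum_comm]
  refine Finset.sum_congr rfl fun k _ => ?_
  rw [Finset.mul_sum]
  refine Finset.sum_congr rfl fun h _ => ?_
  ring

lemma frameS_inner_perm (x : G → H) {ν : G → ℂ} (hν : ∀ g h : G, ⟪x g, x h⟫ = ν (g⁻¹ * h))
    (g : G) (a b : G → ℂ) :
    ⟪frameS x (framePg g a), frameS x (framePg g b)⟫ = ⟪frameS x a, frameS x b⟫ := by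
  rw [frameS_inner x hν, frameS_inner x hν]
  refine Fintype.sum_equiv (Equiv.mulLeft g⁻¹) _ _ (fun h => ?_)
  refine Fintype.sum_equiv (Equiv.mulLeft g⁻¹) _ _ (fun k => ?_)
  simp [framePg_apply, mul_inv_rev, mul_assoc]

end GroupFrameAux

/-- Let `G` be a finite group and `X = {x_g}_{g ∈ G}` a finite frame for a
finite-dimensional complex Hilbert space `H`.  Then `X` is a group frame for `G` (there is
a unitary representation `π` of `G` on `H` with `π(g) x_h = x_{g•h}`) iff its Gramian is a
`G`-matrix, i.e. there is `ν : G → ℂ` with `⟨x_h, x_g⟩ = ν(g⁻¹ • h)` for all `g, h`.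
(The paper's inner product `⟨a, b⟩` is linear in the first slot, i.e. Mathlib's `⟪b, a⟫`.) -/
theorem stmt_13 {G : Type} [Group G] [Fintype G]
    {H : Type} [NormedAddCommGroup H] [InnerProductSpace ℂ H] [FiniteDimensional ℂ H]
    (x : G → H) (hframe : Submodule.span ℂ (Set.range x) = ⊤) :
    (∃ π : G →* (H ≃ₗᵢ[ℂ] H), ∀ g h : G, π g (x h) = x (g * h)) ↔
      ∃ ν : G → ℂ, ∀ g h : G, ⟪x g, x h⟫ = ν (g⁻¹ * h) := by
  constructor
  · rintro ⟨π, hπ⟩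
    refine ⟨fun a => ⟪x 1, x a⟫, fun g h => ?_⟩
    calc ⟪x g, x h⟫ = ⟪π g⁻¹ (x g), π g⁻¹ (x h)⟫ :=
          ((π g⁻¹).inner_map_map _ _).symm
      _ = ⟪x 1, x (g⁻¹ * h)⟫ := by rw [hπ, hπ, inv_mul_cancel]
  · rintro ⟨ν, hν⟩
    classical
    set S := frameS x with hS
    have hsurj : Function.Surjective S := frameS_surj x hframe
    obtain ⟨r, hr⟩ : ∃ r : H → (G → ℂ), ∀ v, S (r v) = v :=
      ⟨Function.surjInv hsurj, Function.surjInv_eq hsurj⟩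
    -- well-definedness
    have wd : ∀ (g : G) (c c' : G → ℂ), S c = S c' →
        S (framePg g c) = S (framePg g c') := by
      intro g c c' hcc
      have h0 : ⟪S (framePg g (c - c')), S (framePg g (c - c'))⟫ = 0 := by
        rw [frameS_inner_perm x hν]
        rw [map_sub, hcc]
        simp [hS]
      have h1 : S (framePg g (c - c')) = 0 := inner_self_eq_zero.mp h0
      have h2 : S (framePg g c) - S (framePg g c') = 0 := by
        rw [← map_sub, ← map_sub]; exact h1
      exact sub_eq_zero.mp h2
    -- linear maps
    have hT : ∀ g : G, ∃ T : H →ₗ[ℂ] H, ∀ c, T (S c) = S (framePg g c) := by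
      intro g
      refine ⟨{ toFun := fun v => S (framePg g (r v))
                map_add' := fun v w => ?_
                map_smul' := fun a v => ?_ }, fun c => ?_⟩
      · show S (framePg g (r (v + w))) = S (framePg g (r v)) + S (framePg g (r w))
        have hvw : S (r (v + w)) = S (r v + r w) := by rw [map_add, hr, hr, hr]
        rw [wd g _ _ hvw, map_add, map_add]
      · show S (framePg g (r (a • v))) = a • S (framePg g (r v))
        have hav : S (r (a • v)) = S (a • r v) := by rw [map_smul, hr, hr]
        rw [wd g _ _ hav, map_smul, map_smul]
      · exact wd g _ _ (hr (S c))
    choose T hTkey using hT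
    have T_mul : ∀ (g g' : G) (v : H), T g (T g' v) = T (g * g') v := by
      intro g g' v
      obtain ⟨c, rfl⟩ := hsurj v
      rw [hTkey, hTkey, hTkey]
      congr 1
      funext h
      simp [framePg_apply, mul_inv_rev, mul_assoc]
    have T_one : ∀ v : H, T 1 v = v := by
      intro v
      obtain ⟨c, rfl⟩ := hsurj v
      rw [hTkey]
      congr 1
      funext h
      simp [framePg_apply]
    have T_inner : ∀ (g : G) (v w : H), ⟪T g v, T g w⟫ = ⟪v, w⟫ := by
      intro g v w
      obtain ⟨c, rfl⟩ := hsurj v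
      obtain ⟨d, rfl⟩ := hsurj w
      rw [hTkey, hTkey, frameS_inner_perm x hν]
    -- linear equivs
    have Ecomp : ∀ g : G, (T g).comp (T g⁻¹) = LinearMap.id := by
      intro g; ext v
      simp [T_mul, T_one]
    let E : G → (H ≃ₗ[ℂ] H) := fun g =>
      LinearEquiv.ofLinear (T g) (T g⁻¹) (Ecomp g) (by simpa using Ecomp g⁻¹)
    let π0 : G → (H ≃ₗᵢ[ℂ] H) := fun g => (E g).isometryOfInner (T_inner g)
    have π0_apply : ∀ (g : G) (v : H), π0 g v = T g v := fun _ _ => rfl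
    refine ⟨MonoidHom.mk' π0 ?_, ?_⟩
    · intro a b
      ext v
      show π0 (a * b) v = π0 a (π0 b v)
      rw [π0_apply, π0_apply, π0_apply, T_mul]
    · intro g h
      show T g (x h) = x (g * h)
      rw [← frameS_single x h, ← hS, hTkey]
      have hp : framePg g (Pi.single h 1) = Pi.single (g * h) 1 := by
        funext k
        simp [framePg_apply, Pi.single_apply, inv_mul_eq_iff_eq_mul]
      rw [hp, hS, frameS_single]
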